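/- Let d ≥ 1 be an integer and let t_{-d} < t_{-d+1} < ⋯ < t_{2d+1} be strictly increasing real numbers. Suppose the two vectors c = (c_{-d}, …, c_d) and c' = (c'_{-d}, …, c'_d) both satisfy, for every δ = 0, …, 2d and every x ∈ ℝ, the identity ∑_{γ=-d}^{d} c_γ ∫_ℝ B(t | t_{γ:γ+d+1}) (x − t)^δ dt = x^δ (respectively with c'). Then c = c'; i.e., the optimal SIAC convolution coefficients are unique. -/

import Mathlib

open MeasureTheory

/-- Divided difference `Δ[t_i, ..., t_j] h`, defined recursively:
`Δ[t_i] h = h (t i)` and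
`Δ[t_{i:j}] h = (Δ[t_{i+1:j}] h - Δ[t_{i:j-1}] h) / (t j - t i)` for `i < j`. -/
noncomputable def dd (t : ℤ → ℝ) (h : ℝ → ℝ) (i j : ℤ) : ℝ :=
  if _hij : i < j then
    (dd t h (i + 1) j - dd t h i (j - 1)) / (t j - t i)
  else h (t i)
termination_by (j - i).toNat
decreasing_by
  · omega
  · omega

open Polynomial

theorem dd_lt (t : ℤ → ℝ) (h : ℝ → ℝ) {i j : ℤ} (hij : i < j) :
    dd t h i j = (dd t h (i + 1) j - dd t h i (j - 1)) / (t j - t i) := by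
  rw [dd]; simp [hij]

theorem dd_le (t : ℤ → ℝ) (h : ℝ → ℝ) {i j : ℤ} (hij : ¬ i < j) :
    dd t h i j = h (t i) := by
  rw [dd]; simp [hij]

theorem dd_zero (t : ℤ → ℝ) (i j : ℤ) : dd t (fun _ => (0:ℝ)) i j = 0 := by
  by_cases hij : i < j
  · rw [dd_lt t _ hij, dd_zero, dd_zero]; simp
  · rw [dd_le t _ hij]
termination_by (j - i).toNat
decreasing_by
  · omega
  · omega

theorem dd_add (t : ℤ → ℝ) (f g : ℝ → ℝ) (i j : ℤ) :
    dd t (fun u => f u + g u) i j = dd t f i j + dd t g i j := by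
  by_cases hij : i < j
  · rw [dd_lt t _ hij, dd_lt t f hij, dd_lt t g hij, dd_add, dd_add]; ring
  · rw [dd_le t _ hij, dd_le t f hij, dd_le t g hij]
termination_by (j - i).toNat
decreasing_by
  · omega
  · omega

theorem dd_mul (t : ℤ → ℝ) (a : ℝ) (f : ℝ → ℝ) (i j : ℤ) :
    dd t (fun u => a * f u) i j = a * dd t f i j := by
  by_cases hij : i < j
  · rw [dd_lt t _ hij, dd_lt t f hij, dd_mul, dd_mul]; ring
  · rw [dd_le t _ hij, dd_le t f hij]
termination_by (j - i).toNat
decreasing_by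
  · omega
  · omega

theorem dd_sum (t : ℤ → ℝ) {α : Type*} (s : Finset α) (f : α → ℝ → ℝ) (i j : ℤ) :
    dd t (fun u => ∑ n ∈ s, f n u) i j = ∑ n ∈ s, dd t (f n) i j := by
  classical
  induction s using Finset.induction with
  | empty => simpa using dd_zero t i j
  | @insert a s hn ih =>
      rw [Finset.sum_insert hn, ← ih, ← dd_add]
      exact congrFun (congrFun (congrArg _ (funext fun u => Finset.sum_insert hn)) i) j

theorem dd_congr (t : ℤ → ℝ) {h h' : ℝ → ℝ} {i j : ℤ}
    (H : ∀ l, i ≤ l → l ≤ j → h (t l) = h' (t l)) (hij : i ≤ j) :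
    dd t h i j = dd t h' i j := by
  rcases lt_or_eq_of_le hij with hlt | rfl
  · rw [dd_lt t h hlt, dd_lt t h' hlt,
      dd_congr t (fun l h1 h2 => H l (by omega) h2) (by omega),
      dd_congr t (fun l h1 h2 => H l h1 (by omega)) (by omega)]
  · rw [dd_le t h (lt_irrefl i), dd_le t h' (lt_irrefl i)]
    exact H i le_rfl le_rfl
termination_by (j - i).toNat
decreasing_by
  · omega
  · omega

theorem dd_const (t : ℤ → ℝ) (a : ℝ) {i j : ℤ} (hij : i < j) :
    dd t (fun _ => a) i j = 0 := by
  by_cases h1 : i + 1 < j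
  · rw [dd_lt t _ hij, dd_const t a h1, dd_const t a (by omega)]; simp
  · have hj : j = i + 1 := by omega
    subst hj
    rw [dd_lt t _ hij, dd_le t _ (by omega), dd_le t _ (by omega)]
    simp
termination_by (j - i).toNat
decreasing_by
  · omega
  · omega

/-- key factor lemma: `Δ[t_{i:j}]((u - t_i) g) = Δ[t_{i+1:j}] g`. -/
theorem dd_factor (t : ℤ → ℝ) (g : ℝ → ℝ) {i j : ℤ} (hij : i < j)
    (hm : ∀ a b, i ≤ a → a < b → b ≤ j → t a < t b) :
    dd t (fun u => (u - t i) * g u) i j = dd t g (i + 1) j := by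
  have hji : t j - t i ≠ 0 := by
    have := hm i j le_rfl hij le_rfl; linarith
  by_cases h1 : i + 1 < j
  · have hji1 : t j - t (i + 1) ≠ 0 := by
      have := hm (i+1) j (by omega) h1 le_rfl; linarith
    have e1 : dd t (fun u => (u - t i) * g u) (i + 1) j
        = dd t g (i + 1 + 1) j + (t (i+1) - t i) * dd t g (i + 1) j := by
      have heq : (fun u => (u - t i) * g u)
          = fun u => (u - t (i+1)) * g u + (t (i+1) - t i) * g u := by
        funext u; ring
      rw [heq, dd_add, dd_mul,
        dd_factor t g h1 (fun a b ha hab hb => hm a b (by omega) hab hb)]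
    have e2 : dd t (fun u => (u - t i) * g u) i (j - 1) = dd t g (i + 1) (j - 1) := by
      have h2 : i < j - 1 := by omega
      exact dd_factor t g h2 (fun a b ha hab hb => hm a b ha hab (by omega))
    have e3 : dd t g (i + 1 + 1) j - dd t g (i + 1) (j - 1)
        = (t j - t (i + 1)) * dd t g (i + 1) j := by
      rw [dd_lt t g h1]; field_simp
    rw [dd_lt t _ hij, e1, e2]
    have : dd t g (i + 1 + 1) j = (t j - t (i + 1)) * dd t g (i + 1) j
        + dd t g (i + 1) (j - 1) := by linarith [e3]
    rw [this]
    field_simp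
    ring
  · have hj : j = i + 1 := by omega
    subst hj
    rw [dd_lt t _ hij, dd_le t _ (by omega), dd_le t _ (by omega), dd_le t _ (by omega)]
    field_simp
    ring
termination_by (j - i).toNat
decreasing_by
  · omega
  · omega

/-- divided difference of a polynomial of degree `< j - i` vanishes. -/
theorem dd_poly (t : ℤ → ℝ) (p : Polynomial ℝ) {i j : ℤ} (hij : i < j)
    (hdeg : (p.natDegree : ℤ) < j - i)
    (hm : ∀ a b, i ≤ a → a < b → b ≤ j → t a < t b) :
    dd t (fun u => p.eval u) i j = 0 := by
  obtain ⟨q, hq⟩ := Polynomial.X_sub_C_dvd_sub_C_eval (a := t i) (p := p)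
  have hp : ∀ u, p.eval u = p.eval (t i) + (u - t i) * q.eval u := by
    intro u
    have := congrArg (Polynomial.eval u) hq
    simp at this
    linarith [this]
  rw [show (fun u => p.eval u) = fun u => p.eval (t i) + (u - t i) * q.eval u from funext hp]
  rw [dd_add, dd_const t _ hij, dd_factor t _ hij hm, zero_add]
  rcases eq_or_ne q 0 with rfl | hq0
  · simpa using dd_zero t (i+1) j
  · have hdq : q.natDegree + 1 = (p - C (p.eval (t i))).natDegree := by
      rw [hq, Polynomial.natDegree_mul (Polynomial.X_sub_C_ne_zero _) hq0]
      simp [Polynomial.natDegree_X_sub_C]; ring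
    have hle : (p - C (p.eval (t i))).natDegree ≤ p.natDegree := by
      apply le_trans (Polynomial.natDegree_sub_le _ _)
      simp
    have hlt : q.natDegree < p.natDegree := by omega
    rcases lt_or_ge (i+1) j with h1 | h1
    · exact dd_poly t q h1 (by omega) (fun a b ha hab hb => hm a b (by omega) hab hb)
    · have hj : j = i + 1 := by omega
      have hdeg0 : p.natDegree = 0 := by omega
      omega
termination_by p.natDegree
decreasing_by
  exact hlt

/-- If `h` vanishes at all knots except possibly the leftmost one, the divided
difference is `h(t_i)` times a product of inverses. -/
theorem dd_isolated (t : ℤ → ℝ) (h : ℝ → ℝ) {i j : ℤ} (hij : i ≤ j)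
    (H : ∀ l, i < l → l ≤ j → h (t l) = 0) :
    dd t h i j = h (t i) * ∏ l ∈ Finset.Ioc i j, (t i - t l)⁻¹ := by
  rcases lt_or_eq_of_le hij with hlt | rfl
  · have e1 : dd t h (i + 1) j = 0 := by
      rw [dd_congr t (h' := fun _ => (0:ℝ)) (fun l h1 h2 => H l (by omega) h2) (by omega)]
      exact dd_zero t _ _
    have e2 : dd t h i (j - 1) = h (t i) * ∏ l ∈ Finset.Ioc i (j-1), (t i - t l)⁻¹ :=
      dd_isolated t h (by omega) (fun l h1 h2 => H l h1 (by omega))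
    rw [dd_lt t h hlt, e1, e2]
    have hins : Finset.Ioc i j = insert j (Finset.Ioc i (j-1)) := by
      ext a; simp [Finset.mem_Ioc, Finset.mem_insert]; omega
    rw [hins, Finset.prod_insert (by simp)]
    rw [div_eq_mul_inv, show (t j - t i)⁻¹ = -(t i - t j)⁻¹ by rw [← inv_neg]; ring_nf]
    ring
  · simp [dd_le t h (lt_irrefl i)]
termination_by (j - i).toNat
decreasing_by
  omega

/-- integrability of a divided difference (in a parameter). -/
theorem dd_integrable (t : ℤ → ℝ) {μ : Measure ℝ} (F : ℝ → ℝ → ℝ) (i j : ℤ)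
    (hij0 : i ≤ j)
    (hF : ∀ l, i ≤ l → l ≤ j → Integrable (fun s => F (t l) s) μ) :
    Integrable (fun s => dd t (fun u => F u s) i j) μ := by
  by_cases hij : i < j
  · have e : (fun s => dd t (fun u => F u s) i j)
        = fun s => (dd t (fun u => F u s) (i+1) j - dd t (fun u => F u s) i (j-1)) / (t j - t i) := by
      funext s; rw [dd_lt t _ hij]
    rw [e]
    exact ((dd_integrable t F (i+1) j (by omega) (fun l h1 h2 => hF l (by omega) h2)).sub
      (dd_integrable t F i (j-1) (by omega) (fun l h1 h2 => hF l h1 (by omega)))).div_const _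
  · have e : (fun s => dd t (fun u => F u s) i j) = fun s => F (t i) s := by
      funext s; rw [dd_le t _ hij]
    rw [e]
    exact hF i le_rfl (by omega)
termination_by (j - i).toNat
decreasing_by
  · omega
  · omega

/-- swap divided difference and integral. -/
theorem dd_integral (t : ℤ → ℝ) {μ : Measure ℝ} (F : ℝ → ℝ → ℝ) (i j : ℤ)
    (hij0 : i ≤ j)
    (hF : ∀ l, i ≤ l → l ≤ j → Integrable (fun s => F (t l) s) μ) :
    ∫ s, dd t (fun u => F u s) i j ∂μ = dd t (fun u => ∫ s, F u s ∂μ) i j := by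
  by_cases hij : i < j
  · have e : (fun s => dd t (fun u => F u s) i j)
        = fun s => (dd t (fun u => F u s) (i+1) j - dd t (fun u => F u s) i (j-1)) / (t j - t i) := by
      funext s; rw [dd_lt t _ hij]
    rw [e, dd_lt t _ hij]
    rw [MeasureTheory.integral_div, MeasureTheory.integral_sub
      (dd_integrable t F (i+1) j (by omega) (fun l h1 h2 => hF l (by omega) h2))
      (dd_integrable t F i (j-1) (by omega) (fun l h1 h2 => hF l h1 (by omega)))]
    rw [dd_integral t F (i+1) j (by omega) (fun l h1 h2 => hF l (by omega) h2),
      dd_integral t F i (j-1) (by omega) (fun l h1 h2 => hF l h1 (by omega))]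
  · rw [dd_le t _ hij]
    have e : (fun s => dd t (fun u => F u s) i j) = fun s => F (t i) s := by
      funext s; rw [dd_le t _ hij]
    rw [e]
termination_by (j - i).toNat
decreasing_by
  · omega
  · omega

theorem Qpos (n : ℕ) {x : ℝ} (hx : 0 < x) : 0 < ∏ j ∈ Finset.range (n+1), (x + j) :=
  Finset.prod_pos fun j _ => by positivity

theorem beta_sum (n : ℕ) : ∀ (x : ℝ), 0 < x →
    ∑ j ∈ Finset.range (n+1), (-1:ℝ)^j * (n.choose j) / (x + j)
      = (n.factorial : ℝ) / ∏ j ∈ Finset.range (n+1), (x + j) := by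
  induction n with
  | zero => intro x hx; simp
  | succ n ih =>
      intro x hx
      have hQx := Qpos n hx
      have hQx1 := Qpos n (by linarith : (0:ℝ) < x + 1)
      have key1 : ∏ j ∈ Finset.range (n+1+1), (x + j) = (∏ j ∈ Finset.range (n+1), (x + j)) * (x + ((n:ℝ)+1)) := by
        rw [Finset.prod_range_succ]; push_cast; ring
      have key2 : ∏ j ∈ Finset.range (n+1+1), (x + j) = x * ∏ j ∈ Finset.range (n+1), ((x+1) + j) := by
        rw [Finset.prod_range_succ']
        rw [show (x + ((0:ℕ):ℝ)) = x by push_cast; ring]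
        rw [mul_comm]
        congr 1
        apply Finset.prod_congr rfl
        intro j _
        push_cast; ring
      have split : ∑ j ∈ Finset.range (n+1+1), (-1:ℝ)^j * ((n+1).choose j) / (x + j)
          = (∑ j ∈ Finset.range (n+1), (-1:ℝ)^j * (n.choose j) / (x + j))
            - ∑ j ∈ Finset.range (n+1), (-1:ℝ)^j * (n.choose j) / ((x+1) + j) := by
        rw [Finset.sum_range_succ' (fun j => (-1:ℝ)^j * ((n+1).choose j) / (x + j)) (n+1)]
        have e1 : ∀ i ∈ Finset.range (n+1),
            (-1:ℝ)^(i+1) * (((n+1).choose (i+1) : ℕ) : ℝ) / (x + ((i+1 : ℕ) : ℝ))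
            = -((-1:ℝ)^i * (n.choose i) / ((x+1) + i))
              + -((-1:ℝ)^i * (n.choose (i+1)) / (x + ((i+1 : ℕ) : ℝ))) := by
          intro i _
          have hi0 : (0:ℝ) ≤ (i:ℝ) := Nat.cast_nonneg i
          rw [Nat.choose_succ_succ]
          have hxi : x + ((i+1 : ℕ) : ℝ) ≠ 0 := by push_cast; linarith
          have hxi1 : (x+1) + (i : ℝ) ≠ 0 := by linarith
          push_cast
          push_cast at hxi
          field_simp
          ring
        rw [Finset.sum_congr rfl e1, Finset.sum_add_distrib]
        have e3 : ∑ i ∈ Finset.range (n+1), -((-1:ℝ)^i * ((n.choose (i+1)):ℝ) / (x + ((i+1:ℕ):ℝ)))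
            = (∑ j ∈ Finset.range (n+1), (-1:ℝ)^j * (n.choose j) / (x + j)) - 1/x := by
          rw [Finset.sum_range_succ (fun i => -((-1:ℝ)^i * ((n.choose (i+1)):ℝ) / (x + ((i+1:ℕ):ℝ))))]
          rw [Nat.choose_succ_self]
          rw [Finset.sum_range_succ' (fun j => (-1:ℝ)^j * ((n.choose j):ℝ) / (x + j)) n]
          simp only [mul_zero, zero_div, neg_zero, add_zero, Nat.cast_zero, pow_zero,
            Nat.choose_zero_right, Nat.cast_one, one_mul, Nat.cast_ofNat, CharP.cast_eq_zero,
            zero_mul]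
          rw [add_sub_cancel_right]
          apply Finset.sum_congr rfl
          intro k _
          ring
        rw [e3]
        simp only [pow_zero, Nat.choose_zero_right, Nat.cast_one, one_mul, Nat.cast_zero, add_zero]
        rw [Finset.sum_neg_distrib]
        ring
      rw [split, ih x hx, ih (x+1) (by linarith)]
      have hQ2 : (0:ℝ) < ∏ j ∈ Finset.range (n+1+1), (x + j) := Qpos (n+1) hx
      rw [div_sub_div _ _ (ne_of_gt hQx) (ne_of_gt hQx1), div_eq_div_iff (by positivity) (ne_of_gt hQ2)]
      have hfac : ((n+1).factorial : ℝ) = (n.factorial : ℝ) * ((n:ℝ)+1) := by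
        rw [Nat.factorial_succ]; push_cast; ring
      push_cast
      push_cast at key1 key2 hfac
      linear_combination ((n.factorial : ℝ) * (∏ j ∈ Finset.range (n+1), ((x+1) + j))) * key1
        - ((n.factorial : ℝ) * (∏ j ∈ Finset.range (n+1), (x + j))) * key2
        - ((∏ j ∈ Finset.range (n+1), (x + j)) * (∏ j ∈ Finset.range (n+1), ((x+1) + j))) * hfac

/-- B-spline of degree `j - i - 1` with knots `t i, ..., t j`:
`B(x | t_{i:j}) = (t_j - t_i) · Δ[t_{i:j}] (max (· - x) 0)^(j-i-1)`. -/
noncomputable def bspline (t : ℤ → ℝ) (i j : ℤ) (x : ℝ) : ℝ :=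
  (t j - t i) * dd t (fun u => (max (u - x) 0) ^ (j - i - 1).toNat) i j

theorem bspline_integral (t : ℤ → ℝ) {i j : ℤ} (hij : i + 1 < j)
    (hm : ∀ a b, i ≤ a → a < b → b ≤ j → t a < t b) (δ : ℕ) (x : ℝ) :
    ∫ s : ℝ, bspline t i j s * (x - s) ^ δ
      = (t j - t i) *
        (∑ p ∈ Finset.range ((j - i - 1).toNat + 1),
           (-1:ℝ)^((j - i - 1).toNat - p + δ) * ((j - i - 1).toNat.choose p : ℝ)
             / ((((j - i - 1).toNat - p + δ : ℕ) : ℝ) + 1))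
        * dd t (fun u => (u - x) ^ ((j - i - 1).toNat + δ + 1)) i j := by
  set n : ℕ := (j - i - 1).toNat with hn
  have hn1 : 1 ≤ n := by omega
  have hji : j - i = (n : ℤ) + 1 := by omega
  have hiltj : i < j := by omega
  have htij : t i < t j := hm i j le_rfl hiltj le_rfl
  have hle : ∀ l, i ≤ l → l ≤ j → t i ≤ t l ∧ t l ≤ t j := by
    intro l h1 h2
    constructor
    · rcases eq_or_lt_of_le h1 with rfl | h; · exact le_rfl
      · exact le_of_lt (hm i l le_rfl h h2)
    · rcases eq_or_lt_of_le h2 with rfl | h; · exact le_rfl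
      · exact le_of_lt (hm l j h1 h le_rfl)
  -- support
  have hsupp : ∀ s : ℝ, s ∉ Set.Ioc (t i) (t j) → bspline t i j s * (x - s) ^ δ = 0 := by
    intro s hs
    simp only [Set.mem_Ioc, not_and_or, not_lt, not_le] at hs
    have hz : bspline t i j s = 0 := by
      unfold bspline
      rw [← hn]
      rcases hs with hs | hs
      · -- s ≤ t i : agrees with a polynomial of degree n < j - i
        have : dd t (fun u => max (u - s) 0 ^ n) i j
            = dd t (fun u => ((Polynomial.X - Polynomial.C s) ^ n).eval u) i j := by
          apply dd_congr t _ (le_of_lt hiltj)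
          intro l h1 h2
          have := (hle l h1 h2).1
          rw [max_eq_left (by linarith)]
          simp
        rw [this, dd_poly t _ hiltj (by simp [Polynomial.natDegree_pow]; omega) hm, mul_zero]
      · -- t j < s
        have : dd t (fun u => max (u - s) 0 ^ n) i j
            = dd t (fun _ => (0:ℝ)) i j := by
          apply dd_congr t _ (le_of_lt hiltj)
          intro l h1 h2
          have := (hle l h1 h2).2
          rw [max_eq_right (by linarith), zero_pow (by omega)]
        rw [this, dd_zero, mul_zero]
    rw [hz, zero_mul]
  rw [← MeasureTheory.setIntegral_eq_integral_of_forall_compl_eq_zero hsupp]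
  -- move everything inside dd
  have hpt : ∀ s : ℝ, bspline t i j s * (x - s) ^ δ
      = (t j - t i) * dd t (fun u => (x - s) ^ δ * max (u - s) 0 ^ n) i j := by
    intro s
    unfold bspline
    rw [← hn, dd_mul]
    ring
  rw [MeasureTheory.setIntegral_congr_fun measurableSet_Ioc (fun s _ => hpt s),
    MeasureTheory.integral_const_mul]
  -- swap dd and integral
  have hcont : ∀ u : ℝ, Continuous (fun s : ℝ => (x - s) ^ δ * max (u - s) 0 ^ n) :=
    fun u => (((continuous_const.sub continuous_id').pow δ).mul
      (((continuous_const.sub continuous_id').max continuous_const).pow n))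
  rw [dd_integral t (fun u s => (x - s) ^ δ * max (u - s) 0 ^ n) i j (le_of_lt hiltj)
    (fun l _ _ => (hcont (t l)).integrableOn_Ioc)]
  -- compute the inner integrals
  have hinner : ∀ l, i ≤ l → l ≤ j →
      (∫ s in Set.Ioc (t i) (t j), (x - s) ^ δ * max (t l - s) 0 ^ n)
      = ∑ p ∈ Finset.range (n + 1),
          ((n.choose p : ℝ) * (t l - x) ^ p *
            (((x - t i) ^ (n - p + δ + 1) - (x - t l) ^ (n - p + δ + 1))
              / (((n - p + δ : ℕ) : ℝ) + 1))) := by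
    intro l h1 h2
    obtain ⟨ha, hb⟩ := hle l h1 h2
    set u := t l
    rw [← intervalIntegral.integral_of_le (le_of_lt htij),
      ← intervalIntegral.integral_add_adjacent_intervals
        (a := t i) (b := u) (c := t j)
        ((hcont u).intervalIntegrable _ _) ((hcont u).intervalIntegrable _ _)]
    have hzero2 : (∫ s in u..(t j), (x - s) ^ δ * max (u - s) 0 ^ n) = 0 := by
      rw [intervalIntegral.integral_congr (g := fun _ => 0)]
      · simp
      · intro s hs
        rw [Set.uIcc_of_le hb] at hs
        dsimp only
        rw [max_eq_right (by linarith [hs.1]), zero_pow (by omega), mul_zero]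
    rw [hzero2, add_zero]
    have hcong1 : (∫ s in (t i)..u, (x - s) ^ δ * max (u - s) 0 ^ n)
        = ∫ s in (t i)..u, ∑ p ∈ Finset.range (n + 1),
            ((n.choose p : ℝ) * (u - x) ^ p * (x - s) ^ (n - p + δ)) := by
      apply intervalIntegral.integral_congr
      intro s hs
      rw [Set.uIcc_of_le ha] at hs
      dsimp only
      rw [max_eq_left (by linarith [hs.2])]
      rw [show u - s = (u - x) + (x - s) by ring, add_pow]
      rw [Finset.mul_sum]
      apply Finset.sum_congr rfl
      intro p hp
      rw [pow_add]
      ring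
    rw [hcong1, intervalIntegral.integral_finset_sum (fun p _ =>
      ((show Continuous (fun s : ℝ => (n.choose p : ℝ) * (u - x) ^ p * (x - s) ^ (n - p + δ)) by
        fun_prop).intervalIntegrable _ _))]
    apply Finset.sum_congr rfl
    intro p hp
    have : (∫ s in (t i)..u, (n.choose p : ℝ) * (u - x) ^ p * (x - s) ^ (n - p + δ))
        = (n.choose p : ℝ) * (u - x) ^ p * ∫ s in (t i)..u, (x - s) ^ (n - p + δ) :=
      intervalIntegral.integral_const_mul _ _
    rw [this, intervalIntegral.integral_comp_sub_left (fun y => y ^ (n - p + δ)) x,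
      integral_pow]
  rw [dd_congr t (h' := fun u => ∑ p ∈ Finset.range (n + 1),
        ((n.choose p : ℝ) * (u - x) ^ p *
          (((x - t i) ^ (n - p + δ + 1) - (x - u) ^ (n - p + δ + 1))
            / (((n - p + δ : ℕ) : ℝ) + 1))))
      (fun l h1 h2 => hinner l h1 h2) (le_of_lt hiltj)]
  -- split into polynomial part and leading part
  have hsplitfun : (fun u : ℝ => ∑ p ∈ Finset.range (n + 1),
        ((n.choose p : ℝ) * (u - x) ^ p *
          (((x - t i) ^ (n - p + δ + 1) - (x - u) ^ (n - p + δ + 1))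
            / (((n - p + δ : ℕ) : ℝ) + 1))))
      = fun u : ℝ => ∑ p ∈ Finset.range (n + 1),
          (((n.choose p : ℝ) * (x - t i) ^ (n - p + δ + 1) / (((n - p + δ : ℕ) : ℝ) + 1))
              * ((Polynomial.X - Polynomial.C x) ^ p).eval u
            + ((-1:ℝ)^(n - p + δ) * (n.choose p : ℝ) / (((n - p + δ : ℕ) : ℝ) + 1))
              * (u - x) ^ (n + δ + 1)) := by
    funext v
    apply Finset.sum_congr rfl
    intro p hp
    simp only [Finset.mem_range] at hp
    have hpn : p ≤ n := by omega
    have hexp : p + (n - p + δ + 1) = n + δ + 1 := by omega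
    have hxv : (x - v) ^ (n - p + δ + 1) = (-1:ℝ)^(n - p + δ + 1) * (v - x) ^ (n - p + δ + 1) := by
      rw [show x - v = -(v - x) by ring, neg_pow]
    simp only [Polynomial.eval_pow, Polynomial.eval_sub, Polynomial.eval_X, Polynomial.eval_C]
    rw [hxv]
    rw [show ((-1:ℝ)^(n - p + δ + 1) = -(-1:ℝ)^(n - p + δ)) by rw [pow_succ]; ring]
    rw [show (v - x) ^ (n + δ + 1) = (v - x) ^ p * (v - x) ^ (n - p + δ + 1) by
      rw [← pow_add, hexp]]
    ring
  rw [hsplitfun, dd_sum]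
  have hterm : ∀ p ∈ Finset.range (n + 1),
      dd t (fun u => (((n.choose p : ℝ) * (x - t i) ^ (n - p + δ + 1) / (((n - p + δ : ℕ) : ℝ) + 1))
              * ((Polynomial.X - Polynomial.C x) ^ p).eval u
            + ((-1:ℝ)^(n - p + δ) * (n.choose p : ℝ) / (((n - p + δ : ℕ) : ℝ) + 1))
              * (u - x) ^ (n + δ + 1))) i j
      = ((-1:ℝ)^(n - p + δ) * (n.choose p : ℝ) / (((n - p + δ : ℕ) : ℝ) + 1))
          * dd t (fun u => (u - x) ^ (n + δ + 1)) i j := by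
    intro p hp
    simp only [Finset.mem_range] at hp
    rw [dd_add, dd_mul, dd_mul]
    rw [dd_poly t _ hiltj (by simp [Polynomial.natDegree_pow]; omega) hm]
    ring
  rw [Finset.sum_congr rfl hterm, ← Finset.sum_mul]
  ring

/-- Uniqueness of the optimal SIAC convolution coefficients: if both
`c` and `c'` satisfy `∑_γ c_γ ∫ B(t | t_{γ:γ+d+1}) (x - t)^δ dt = x^δ` for every
`δ = 0..2d` and every `x ∈ ℝ`, then `c = c'`. -/
theorem stmt2 (d : ℕ) (hd : 1 ≤ d) (t : ℤ → ℝ)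
    (ht : ∀ i : ℤ, -(d : ℤ) ≤ i → i < 2 * d + 1 → t i < t (i + 1))
    (c c' : Fin (2 * d + 1) → ℝ)
    (hc : ∀ (δ : Fin (2 * d + 1)) (x : ℝ),
      ∑ γ : Fin (2 * d + 1), c γ *
        ∫ s : ℝ, bspline t (((γ : ℕ) : ℤ) - d) ((((γ : ℕ) : ℤ) - d) + (d + 1)) s *
          (x - s) ^ (δ : ℕ) = x ^ (δ : ℕ))
    (hc' : ∀ (δ : Fin (2 * d + 1)) (x : ℝ),
      ∑ γ : Fin (2 * d + 1), c' γ *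
        ∫ s : ℝ, bspline t (((γ : ℕ) : ℤ) - d) ((((γ : ℕ) : ℤ) - d) + (d + 1)) s *
          (x - s) ^ (δ : ℕ) = x ^ (δ : ℕ)) :
    c = c' := by
  -- strict monotonicity on the full knot range
  have tmono : ∀ a b : ℤ, -(d:ℤ) ≤ a → a < b → b ≤ 2*(d:ℤ)+1 → t a < t b := by
    intro a b ha hab hb
    have key : ∀ k : ℕ, a + 1 + k ≤ 2*(d:ℤ)+1 → t a < t (a + 1 + k) := by
      intro k
      induction k with
      | zero => intro h2; simpa using ht a ha (by omega)
      | succ k ihk =>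
          intro h2
          have e : a + 1 + ((k:ℤ)+1) = (a + 1 + k) + 1 := by ring
          push_cast
          rw [e]
          exact lt_trans (ihk (by push_cast at h2 ⊢; omega))
            (ht (a+1+k) (by omega) (by push_cast at h2 ⊢; omega))
    have : b = a + 1 + ((b - a - 1).toNat : ℤ) := by omega
    rw [this]
    exact key _ (by omega)
  set I : Fin (2*d+1) → ℤ := fun γ => ((γ : ℕ) : ℤ) - d with hI
  have hIdef : ∀ γ : Fin (2*d+1), I γ = ((γ : ℕ) : ℤ) - d := fun _ => by rw [hI]
  set K : ℕ → ℝ := fun δ => ∑ p ∈ Finset.range (d + 1),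
      (-1:ℝ)^(d - p + δ) * (d.choose p : ℝ) / (((d - p + δ : ℕ) : ℝ) + 1) with hK
  have hwin : ∀ γ : Fin (2*d+1), ∀ a b : ℤ, I γ ≤ a → a < b → b ≤ I γ + ((d:ℤ)+1) → t a < t b := by
    intro γ a b ha hab hb
    have hγ := γ.isLt
    rw [hIdef γ] at ha hb
    exact tmono a b (by omega) hab (by omega)
  have hint : ∀ (γ : Fin (2*d+1)) (δ : ℕ) (x : ℝ),
      (∫ s : ℝ, bspline t (I γ) (I γ + ((d:ℤ) + 1)) s * (x - s) ^ δ)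
      = (t (I γ + ((d:ℤ)+1)) - t (I γ)) * K δ
          * dd t (fun u => (u - x) ^ (d + δ + 1)) (I γ) (I γ + ((d:ℤ)+1)) := by
    intro γ δ x
    have e : (I γ + ((d:ℤ)+1) - I γ - 1).toNat = d := by rw [hIdef]; omega
    rw [bspline_integral t (by rw [hIdef]; omega) (hwin γ) δ x, e, hK]
  -- K δ is explicitly a nonzero constant
  have hKval : ∀ δ : ℕ, K δ = (-1:ℝ)^δ *
      ((d.factorial : ℝ) / ∏ j ∈ Finset.range (d+1), (((δ:ℝ)+1) + j)) := by
    intro δ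
    simp only [hK]
    rw [← Finset.sum_range_reflect]
    rw [← beta_sum d ((δ:ℝ)+1) (by positivity), Finset.mul_sum]
    apply Finset.sum_congr rfl
    intro q hq
    simp only [Finset.mem_range] at hq
    have hqd : q ≤ d := by omega
    have e1 : d + 1 - 1 - q = d - q := by omega
    have e2 : d - (d - q) + δ = q + δ := by omega
    rw [e1, e2, Nat.choose_symm hqd]
    have e3 : ((q + δ : ℕ) : ℝ) + 1 = ((δ:ℝ)+1) + q := by push_cast; ring
    rw [e3, pow_add]
    ring
  have hKne : ∀ δ : ℕ, K δ ≠ 0 := by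
    intro δ
    rw [hKval δ]
    have h1 : (0:ℝ) < (d.factorial : ℝ) := by positivity
    have h2 : (0:ℝ) < ∏ j ∈ Finset.range (d+1), (((δ:ℝ)+1) + j) :=
      Qpos d (by positivity)
    have h3 : ((-1:ℝ)^δ) ≠ 0 := by
      apply pow_ne_zero; norm_num
    positivity
  -- the difference coefficients
  set B : Fin (2*d+1) → ℝ :=
    fun γ => (c γ - c' γ) * (t (I γ + ((d:ℤ)+1)) - t (I γ)) with hB
  -- key relations for monomials
  have SN : ∀ N : ℕ, d + 1 ≤ N → N ≤ 3*d+1 →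
      ∑ γ : Fin (2*d+1), B γ * dd t (fun u => u ^ N) (I γ) (I γ + ((d:ℤ)+1)) = 0 := by
    intro N h1 h2
    have hδ : N - (d+1) < 2*d+1 := by omega
    set δ : Fin (2*d+1) := ⟨N - (d+1), hδ⟩ with hδ'
    have hA : ∑ γ : Fin (2*d+1), c γ *
        ∫ s : ℝ, bspline t (I γ) (I γ + ((d:ℤ)+1)) s * ((0:ℝ) - s) ^ (δ:ℕ)
        = (0:ℝ) ^ (δ:ℕ) := hc δ 0
    have hA' : ∑ γ : Fin (2*d+1), c' γ *
        ∫ s : ℝ, bspline t (I γ) (I γ + ((d:ℤ)+1)) s * ((0:ℝ) - s) ^ (δ:ℕ)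
        = (0:ℝ) ^ (δ:ℕ) := hc' δ 0
    have hmono : (d + ((δ:ℕ)) + 1) = N := by
      have : (δ:ℕ) = N - (d+1) := rfl
      omega
    have efun : (fun u : ℝ => (u - (0:ℝ)) ^ (d + (δ:ℕ) + 1)) = fun u : ℝ => u ^ N := by
      funext u; rw [sub_zero, hmono]
    have key2 : K (δ:ℕ) * (∑ γ : Fin (2*d+1), B γ *
        dd t (fun u => u ^ N) (I γ) (I γ + ((d:ℤ)+1))) = 0 := by
      calc K (δ:ℕ) * (∑ γ : Fin (2*d+1), B γ *
            dd t (fun u => u ^ N) (I γ) (I γ + ((d:ℤ)+1)))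
          = ∑ γ : Fin (2*d+1), (c γ - c' γ) *
              (∫ s : ℝ, bspline t (I γ) (I γ + ((d:ℤ)+1)) s * ((0:ℝ) - s) ^ (δ:ℕ)) := by
            rw [Finset.mul_sum]
            apply Finset.sum_congr rfl
            intro γ _
            rw [hint γ (δ:ℕ) 0, efun, hB]
            ring
        _ = (∑ γ : Fin (2*d+1), c γ *
              (∫ s : ℝ, bspline t (I γ) (I γ + ((d:ℤ)+1)) s * ((0:ℝ) - s) ^ (δ:ℕ)))
            - ∑ γ : Fin (2*d+1), c' γ *
              (∫ s : ℝ, bspline t (I γ) (I γ + ((d:ℤ)+1)) s * ((0:ℝ) - s) ^ (δ:ℕ)) := by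
            rw [← Finset.sum_sub_distrib]
            apply Finset.sum_congr rfl
            intro γ _
            ring
        _ = 0 := by rw [hA, hA']; ring
    exact (mul_eq_zero.mp key2).resolve_left (hKne (δ:ℕ))
  -- extension to all polynomials of degree ≤ 3d+1
  have SP : ∀ P : Polynomial ℝ, P.natDegree ≤ 3*d+1 →
      ∑ γ : Fin (2*d+1), B γ * dd t (fun u => P.eval u) (I γ) (I γ + ((d:ℤ)+1)) = 0 := by
    intro P hP
    have hev : ∀ u : ℝ, P.eval u = ∑ N ∈ Finset.range (3*d+2), P.coeff N * u ^ N := by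
      intro u
      rw [Polynomial.eval_eq_sum_range' (n := 3*d+2) (by omega) u]
    have hdd : ∀ γ : Fin (2*d+1), dd t (fun u => P.eval u) (I γ) (I γ + ((d:ℤ)+1))
        = ∑ N ∈ Finset.range (3*d+2), P.coeff N *
            dd t (fun u => u ^ N) (I γ) (I γ + ((d:ℤ)+1)) := by
      intro γ
      rw [show (fun u : ℝ => P.eval u)
          = fun u : ℝ => ∑ N ∈ Finset.range (3*d+2), P.coeff N * u ^ N from funext hev]
      rw [dd_sum]
      apply Finset.sum_congr rfl
      intro N _
      rw [dd_mul]
    calc ∑ γ : Fin (2*d+1), B γ * dd t (fun u => P.eval u) (I γ) (I γ + ((d:ℤ)+1))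
        = ∑ γ : Fin (2*d+1), ∑ N ∈ Finset.range (3*d+2),
            P.coeff N * (B γ * dd t (fun u => u ^ N) (I γ) (I γ + ((d:ℤ)+1))) := by
          apply Finset.sum_congr rfl
          intro γ _
          rw [hdd γ, Finset.mul_sum]
          apply Finset.sum_congr rfl
          intro N _
          ring
      _ = ∑ N ∈ Finset.range (3*d+2), P.coeff N *
            ∑ γ : Fin (2*d+1), B γ * dd t (fun u => u ^ N) (I γ) (I γ + ((d:ℤ)+1)) := by
          rw [Finset.sum_comm]
          apply Finset.sum_congr rfl
          intro N _
          rw [Finset.mul_sum]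
      _ = 0 := by
          apply Finset.sum_eq_zero
          intro N hN
          simp only [Finset.mem_range] at hN
          rcases le_or_gt N d with hNd | hNd
          · have hz : ∀ γ : Fin (2*d+1),
                dd t (fun u => u ^ N) (I γ) (I γ + ((d:ℤ)+1)) = 0 := by
              intro γ
              have e : (fun u : ℝ => u ^ N) = fun u => (Polynomial.X ^ N : Polynomial ℝ).eval u := by
                funext u; simp
              rw [e]
              apply dd_poly t _ (by omega) _ (hwin γ)
              simp only [Polynomial.natDegree_pow, Polynomial.natDegree_X, mul_one]
              omega
            rw [Finset.sum_eq_zero (fun γ _ => by rw [hz γ, mul_zero]), mul_zero]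
          · rw [SN N (by omega) (by omega), mul_zero]
  -- kill the coefficients one by one
  have hBzero : ∀ m : ℕ, ∀ hm : m < 2*d+1, B ⟨m, hm⟩ = 0 := by
    intro m
    induction m using Nat.strong_induction_on with
    | _ m ih =>
      intro hm
      set γ0 : Fin (2*d+1) := ⟨m, hm⟩ with hγ0
      set P : Polynomial ℝ :=
        ∏ l ∈ Finset.Icc ((m:ℤ)+1-d) (2*(d:ℤ)+1), (Polynomial.X - Polynomial.C (t l)) with hP
      have hPdeg : P.natDegree ≤ 3*d+1 := by
        rw [hP, Polynomial.natDegree_prod_of_monic _ _ (fun l _ => Polynomial.monic_X_sub_C _)]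
        simp only [Polynomial.natDegree_X_sub_C, Finset.sum_const, smul_eq_mul, mul_one]
        rw [Int.card_Icc]
        omega
      have hPeval : ∀ l : ℤ, (m:ℤ)+1-d ≤ l → l ≤ 2*(d:ℤ)+1 → P.eval (t l) = 0 := by
        intro l h1 h2
        rw [hP, Polynomial.eval_prod]
        apply Finset.prod_eq_zero (Finset.mem_Icc.mpr ⟨h1, h2⟩)
        simp
      have hIm : I γ0 = (m:ℤ) - d := by rw [hIdef]
      have hsum := SP P hPdeg
      rw [Finset.sum_eq_single γ0] at hsum
      · -- the γ0 term
        have hd0 : dd t (fun u => P.eval u) (I γ0) (I γ0 + ((d:ℤ)+1))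
            = P.eval (t (I γ0)) * ∏ l ∈ Finset.Ioc (I γ0) (I γ0 + ((d:ℤ)+1)), (t (I γ0) - t l)⁻¹ := by
          apply dd_isolated t _ (by omega)
          intro l hl1 hl2
          rw [hIm] at hl1 hl2
          apply hPeval l (by omega) (by omega)
        have hne1 : P.eval (t (I γ0)) ≠ 0 := by
          rw [hP, Polynomial.eval_prod]
          apply Finset.prod_ne_zero_iff.mpr
          intro l hl
          simp only [Finset.mem_Icc] at hl
          simp only [Polynomial.eval_sub, Polynomial.eval_X, Polynomial.eval_C]
          have : t (I γ0) < t l := by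
            rw [hIm]
            apply tmono _ _ (by omega) (by omega) (by omega)
          linarith
        have hne2 : (∏ l ∈ Finset.Ioc (I γ0) (I γ0 + ((d:ℤ)+1)), (t (I γ0) - t l)⁻¹) ≠ 0 := by
          apply Finset.prod_ne_zero_iff.mpr
          intro l hl
          simp only [Finset.mem_Ioc] at hl
          apply inv_ne_zero
          have : t (I γ0) < t l := by
            rw [hIm] at hl ⊢
            apply tmono _ _ (by omega) (by omega) (by omega)
          linarith
        rw [hd0] at hsum
        rcases mul_eq_zero.mp hsum with h | h
        · exact h
        · rcases mul_eq_zero.mp h with h' | h'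
          · exact absurd h' hne1
          · exact absurd h' hne2
      · -- other terms vanish
        intro γ _ hne
        have hnem : (γ:ℕ) ≠ m := by
          intro h
          exact hne (Fin.ext (by simpa [hγ0] using h))
        rcases lt_or_gt_of_ne hnem with hlt | hgt
        · have hzB : B γ = 0 := by
            have := ih (γ:ℕ) hlt γ.isLt
            simpa [Fin.eta] using this
          rw [hzB, zero_mul]
        · have hz : dd t (fun u => P.eval u) (I γ) (I γ + ((d:ℤ)+1)) = 0 := by
            have hzf : ∀ l, I γ ≤ l → l ≤ I γ + ((d:ℤ)+1) →
                P.eval (t l) = (fun _ : ℝ => (0:ℝ)) (t l) := by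
              intro l hl1 hl2
              have hγd := γ.isLt
              rw [hIdef] at hl1 hl2
              exact hPeval l (by omega) (by omega)
            rw [dd_congr t (h' := fun _ => (0:ℝ)) hzf (by omega)]
            exact dd_zero t _ _
          rw [hz, mul_zero]
      · intro hmem
        exact absurd (Finset.mem_univ γ0) hmem
  -- conclude
  funext γ
  have hγd := γ.isLt
  have hBγ : B γ = 0 := by
    have := hBzero (γ:ℕ) γ.isLt
    simpa [Fin.eta] using this
  have hpos : t (I γ) < t (I γ + ((d:ℤ)+1)) := by
    rw [hIdef]
    apply tmono _ _ (by omega) (by omega) (by omega)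
  rw [hB] at hBγ
  rcases mul_eq_zero.mp hBγ with h | h
  · linarith [sub_eq_zero.mp h]
  · linarith [sub_eq_zero.mp h]
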